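/- Let X be a finite set and p a random joint choice rule with nonnegative Möbius inverse q (complete monotonicity). Then p satisfies across-period increasing differences: for all A ⊆ A', B ⊆ B' with (x,y) ∈ A × B, p(x,y,A,B) - p(x,y,A,B') ≥ p(x,y,A',B) - p(x,y,A',B'). -/
import Mathlib


open Finset

/-- The Möbius inverse of `p` in the two menu coordinates. -/
noncomputable def mob2 {X : Type*} [Fintype X] [DecidableEq X]
    (p : X → X → Finset X → Finset X → ℝ) (x y : X) (A B : Finset X) : ℝ :=
  ∑ A' ∈ Finset.univ.filter (fun A' => A ⊆ A'),
    ∑ B' ∈ Finset.univ.filter (fun B' => B ⊆ B'),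
      (-1 : ℝ) ^ ((A' \ A).card + (B' \ B).card) * p x y A' B'

open Finset

private lemma pow_sum_real {α : Type*} [DecidableEq α] (T : Finset α) :
    (∑ m ∈ T.powerset, (-1 : ℝ) ^ m.card) = if T = ∅ then 1 else 0 := by
  have h0 := @Finset.sum_powerset_neg_one_pow_card α _ T
  have h : ((∑ m ∈ T.powerset, (-1 : ℤ) ^ m.card : ℤ) : ℝ)
      = ∑ m ∈ T.powerset, (-1 : ℝ) ^ m.card := by push_cast; ring
  rw [← h, h0]
  split <;> norm_num

private lemma interval_sum {X : Type*} [Fintype X] [DecidableEq X] (A C' : Finset X)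
    (hAC : A ⊆ C') :
    ∑ C ∈ Finset.univ.filter (fun C => A ⊆ C ∧ C ⊆ C'), ((-1:ℝ))^((C' \ C).card)
      = if C' = A then 1 else 0 := by
  have key : ∑ C ∈ Finset.univ.filter (fun C => A ⊆ C ∧ C ⊆ C'), ((-1:ℝ))^((C' \ C).card)
      = ∑ S ∈ (C' \ A).powerset, ((-1:ℝ))^(S.card) := by
    apply Finset.sum_nbij' (fun C => C' \ C) (fun S => C' \ S)
    · intro C hC
      simp only [mem_filter, mem_univ, true_and] at hC
      exact mem_powerset.2 (sdiff_subset_sdiff (Subset.refl _) hC.1)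
    · intro S hS
      simp only [mem_powerset, mem_sdiff] at hS ⊢
      simp only [mem_filter, mem_univ, true_and]
      constructor
      · intro a ha
        simp only [mem_sdiff]
        exact ⟨hAC ha, fun hmem => (mem_sdiff.1 (hS hmem)).2 ha⟩
      · exact sdiff_subset
    · intro C hC
      simp only [mem_filter, mem_univ, true_and] at hC
      exact Finset.sdiff_sdiff_eq_self hC.2
    · intro S hS
      simp only [mem_powerset] at hS
      exact Finset.sdiff_sdiff_eq_self (hS.trans sdiff_subset)
    · intro C hC
      rfl
  rw [key, pow_sum_real]
  have : (C' \ A = ∅) = (C' = A) := by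
    rw [Finset.sdiff_eq_empty_iff_subset]
    exact propext ⟨fun h => Finset.Subset.antisymm h hAC, fun h => h ▸ Finset.Subset.refl _⟩
  simp only [this]

private lemma mob1_inv {X : Type*} [Fintype X] [DecidableEq X] (f : Finset X → ℝ)
    (A : Finset X) :
    ∑ C ∈ Finset.univ.filter (fun C => A ⊆ C),
      ∑ C' ∈ Finset.univ.filter (fun C' => C ⊆ C'), (-1:ℝ)^((C' \ C).card) * f C' = f A := by
  have step1 : ∀ C : Finset X,
      ∑ C' ∈ Finset.univ.filter (fun C' => C ⊆ C'), (-1:ℝ)^((C' \ C).card) * f C'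
      = ∑ C' ∈ (Finset.univ : Finset (Finset X)),
          if C ⊆ C' then (-1:ℝ)^((C' \ C).card) * f C' else 0 := by
    intro C; rw [Finset.sum_filter]
  calc ∑ C ∈ Finset.univ.filter (fun C => A ⊆ C),
        ∑ C' ∈ Finset.univ.filter (fun C' => C ⊆ C'), (-1:ℝ)^((C' \ C).card) * f C'
      = ∑ C ∈ (Finset.univ : Finset (Finset X)),
          if A ⊆ C then ∑ C' ∈ (Finset.univ : Finset (Finset X)),
            (if C ⊆ C' then (-1:ℝ)^((C' \ C).card) * f C' else 0) else 0 := by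
        rw [Finset.sum_filter]; exact Finset.sum_congr rfl fun C _ => by
          split <;> simp [step1]
    _ = ∑ C' ∈ (Finset.univ : Finset (Finset X)),
          ∑ C ∈ (Finset.univ : Finset (Finset X)),
            (if A ⊆ C then (if C ⊆ C' then (-1:ℝ)^((C' \ C).card) * f C' else 0) else 0) := by
        rw [Finset.sum_comm]
        exact Finset.sum_congr rfl fun C _ => by split <;> simp
    _ = ∑ C' ∈ (Finset.univ : Finset (Finset X)), (if C' = A then 1 else 0) * f C' := by
        apply Finset.sum_congr rfl
        intro C' _
        by_cases hAC : A ⊆ C'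
        · have : ∑ C ∈ (Finset.univ : Finset (Finset X)),
              (if A ⊆ C then (if C ⊆ C' then (-1:ℝ)^((C' \ C).card) * f C' else 0) else 0)
              = (∑ C ∈ Finset.univ.filter (fun C => A ⊆ C ∧ C ⊆ C'),
                  ((-1:ℝ))^((C' \ C).card)) * f C' := by
            rw [Finset.sum_mul, Finset.sum_filter]
            apply Finset.sum_congr rfl
            intro C _
            by_cases h1 : A ⊆ C <;> by_cases h2 : C ⊆ C' <;> simp [h1, h2]
          rw [this, interval_sum A C' hAC]
        · have hne : C' ≠ A := fun h => hAC (h ▸ Subset.refl _)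
          rw [if_neg hne, zero_mul]
          apply Finset.sum_eq_zero
          intro C _
          by_cases h1 : A ⊆ C
          · by_cases h2 : C ⊆ C'
            · exact absurd (h1.trans h2) hAC
            · simp [h1, h2]
          · simp [h1]
    _ = f A := by
        simp [ite_mul, Finset.sum_ite_eq']

private lemma mob2_inv {X : Type*} [Fintype X] [DecidableEq X]
    (p : X → X → Finset X → Finset X → ℝ) (x y : X) (A B : Finset X) :
    ∑ C ∈ Finset.univ.filter (fun C => A ⊆ C),
      ∑ D ∈ Finset.univ.filter (fun D => B ⊆ D), mob2 p x y C D = p x y A B := by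
  set g : Finset X → Finset X → ℝ := fun C' D =>
    ∑ D' ∈ Finset.univ.filter (fun D' => D ⊆ D'), (-1:ℝ)^((D' \ D).card) * p x y C' D'
    with hg
  have hmob : ∀ C D, mob2 p x y C D
      = ∑ C' ∈ Finset.univ.filter (fun C' => C ⊆ C'), (-1:ℝ)^((C' \ C).card) * g C' D := by
    intro C D
    rw [mob2]
    apply Finset.sum_congr rfl
    intro C' _
    rw [hg, Finset.mul_sum]
    apply Finset.sum_congr rfl
    intro D' _
    ring
  calc ∑ C ∈ Finset.univ.filter (fun C => A ⊆ C),
        ∑ D ∈ Finset.univ.filter (fun D => B ⊆ D), mob2 p x y C D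
      = ∑ D ∈ Finset.univ.filter (fun D => B ⊆ D),
        ∑ C ∈ Finset.univ.filter (fun C => A ⊆ C),
          ∑ C' ∈ Finset.univ.filter (fun C' => C ⊆ C'), (-1:ℝ)^((C' \ C).card) * g C' D := by
        rw [Finset.sum_comm]
        exact Finset.sum_congr rfl fun D _ => Finset.sum_congr rfl fun C _ => hmob C D
    _ = ∑ D ∈ Finset.univ.filter (fun D => B ⊆ D), g A D := by
        exact Finset.sum_congr rfl fun D _ => mob1_inv (fun C' => g C' D) A
    _ = p x y A B := mob1_inv (p x y A) B

/-- A random joint choice rule with nonnegative Möbius inverse (complete monotonicity)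
satisfies across-period increasing differences. -/
theorem stmt2 {X : Type*} [Fintype X] [DecidableEq X]
    (p : X → X → Finset X → Finset X → ℝ)
    (hnn : ∀ (A B : Finset X), ∀ x ∈ A, ∀ y ∈ B, 0 ≤ p x y A B)
    (hsum : ∀ (A B : Finset X), A.Nonempty → B.Nonempty →
      ∑ x ∈ A, ∑ y ∈ B, p x y A B = 1)
    (hq : ∀ (A B : Finset X), ∀ x ∈ A, ∀ y ∈ B, 0 ≤ mob2 p x y A B) :
    ∀ (A A' B B' : Finset X), A ⊆ A' → B ⊆ B' → ∀ x ∈ A, ∀ y ∈ B,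
      p x y A' B - p x y A' B' ≤ p x y A B - p x y A B' := by
  intro A A' B B' hAA hBB x hx y hy
  set SB : Finset (Finset X) := Finset.univ.filter (fun D => B ⊆ D) with hSB
  set SB' : Finset (Finset X) := Finset.univ.filter (fun D => B' ⊆ D) with hSB'
  have hsub : SB' ⊆ SB := by
    intro D hD
    simp only [hSB, hSB', mem_filter, mem_univ, true_and] at *
    exact hBB.trans hD
  have key : ∀ E : Finset X, p x y E B - p x y E B'
      = ∑ C ∈ Finset.univ.filter (fun C => E ⊆ C), ∑ D ∈ SB \ SB', mob2 p x y C D := by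
    intro E
    rw [← mob2_inv p x y E B, ← mob2_inv p x y E B', ← Finset.sum_sub_distrib]
    exact Finset.sum_congr rfl fun C _ => (Finset.sum_sdiff_eq_sub hsub).symm
  rw [key A, key A']
  apply Finset.sum_le_sum_of_subset_of_nonneg
  · intro C hC
    simp only [mem_filter, mem_univ, true_and] at *
    exact hAA.trans hC
  · intro C hC _
    simp only [mem_filter, mem_univ, true_and] at hC
    apply Finset.sum_nonneg
    intro D hD
    have hD' := Finset.mem_sdiff.1 hD
    have hBD : B ⊆ D := by
      have := hD'.1
      simp only [hSB, mem_filter, mem_univ, true_and] at this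
      exact this
    exact hq C D x (hC hx) y (hBD hy)
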